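/- If G is a finite simple graph containing no induced subgraph isomorphic to 2P_3 (the disjoint union of two paths on three vertices), and M is an acyclic matching in G, then at most one connected component of the induced subgraph G(M) is not isomorphic to K_2. -/

import Mathlib

open SimpleGraph

section Aux
variable {W α β : Type*} {H : SimpleGraph W}

lemma aux_no_triangle (hac : H.IsAcyclic) {x y z : W}
    (hxy : H.Adj x y) (hyz : H.Adj y z) (hxz : H.Adj x z) : False := by
  classical
  have hcyc : (Walk.cons hxy (Walk.cons hyz (Walk.cons hxz.symm Walk.nil))).IsCycle := by
    simp [Walk.isCycle_def, Walk.isTrail_def, hxy.ne, hyz.ne, hxz.ne, hxy.ne',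
      hyz.ne', hxz.ne', Sym2.eq_iff]
  exact hac _ hcyc

lemma aux_center (hac : H.IsAcyclic) {u v w : W}
    (huv : u ≠ v) (huw : u ≠ w) (hvw : H.Adj v w) (hr : H.Reachable u v) :
    ∃ a y b : W, H.Adj y a ∧ H.Adj y b ∧ a ≠ b ∧ ¬ H.Adj a b ∧ H.Reachable u y := by
  classical
  obtain ⟨q⟩ := hr
  obtain ⟨p, hp⟩ := q.toPath
  cases p with
  | nil => exact absurd rfl huv
  | cons h q' =>
    rename_i m1
    cases q' with
    | nil =>
      refine ⟨u, v, w, h.symm, hvw, huw, ?_, h.reachable⟩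
      intro hadj
      exact aux_no_triangle hac h hvw hadj
    | cons h2 r =>
      rename_i m2
      have hu_not : u ∉ (Walk.cons h2 r).support := ((Walk.cons_isPath_iff _ _).mp hp).2
      have hm2mem : m2 ∈ (Walk.cons h2 r).support := by
        simp [Walk.support_cons, r.start_mem_support]
      have hum2 : u ≠ m2 := fun hh => hu_not (hh ▸ hm2mem)
      refine ⟨u, m1, m2, h.symm, h2, hum2, ?_, h.reachable⟩
      intro hadj
      exact aux_no_triangle hac h h2 hadj

def path3Emb {a y b : W} (h1 : H.Adj y a) (h2 : H.Adj y b) (hab : a ≠ b)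
    (hnab : ¬H.Adj a b) : pathGraph 3 ↪g H := by
  have hay : a ≠ y := h1.ne'
  have hyb : y ≠ b := h2.ne
  have h1s := h1.symm
  have h2s := h2.symm
  have hnba : ¬ H.Adj b a := fun h => hnab h.symm
  refine ⟨⟨![a, y, b], ?_⟩, ?_⟩
  · intro i j hij
    fin_cases i <;> fin_cases j <;> simp_all
  · intro i j
    change H.Adj (![a, y, b] i) (![a, y, b] j) ↔ _
    fin_cases i <;> fin_cases j <;>
      simp_all [pathGraph_adj, H.irrefl]

@[simp] lemma path3Emb_apply {a y b : W} (h1 : H.Adj y a) (h2 : H.Adj y b) (hab : a ≠ b)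
    (hnab : ¬H.Adj a b) (i : Fin 3) : path3Emb h1 h2 hab hnab i = ![a, y, b] i := rfl

def sumEmb {A : SimpleGraph α} {B : SimpleGraph β} (f : A ↪g H) (g : B ↪g H)
    (hne : ∀ u v, f u ≠ g v) (hna : ∀ u v, ¬ H.Adj (f u) (g v)) : (A ⊕g B) ↪g H := by
  refine ⟨⟨Sum.elim f g, ?_⟩, ?_⟩
  · rintro (u | u) (v | v) h <;> simp only [Sum.elim_inl, Sum.elim_inr] at h
    · exact congrArg Sum.inl (f.injective h)
    · exact absurd h (hne u v)
    · exact absurd h.symm (hne v u)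
    · exact congrArg Sum.inr (g.injective h)
  · intro x y
    change H.Adj (Sum.elim (⇑f) (⇑g) x) (Sum.elim (⇑f) (⇑g) y) ↔ _
    rcases x with u | u <;> rcases y with v | v <;>
      simp only [Function.Embedding.coeFn_mk, Sum.elim_inl, Sum.elim_inr,
        SimpleGraph.sum_adj, f.map_rel_iff, g.map_rel_iff, iff_self]
    · exact iff_of_false (hna u v) (by simp)
    · exact iff_of_false (fun h => hna v u h.symm) (by simp)

end Aux

/-- A graph `G` is *2P₃-free* if it contains no induced subgraph isomorphic to the
disjoint union of two paths on three vertices.  (Graph embeddings `↪g` are exactly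
induced-subgraph copies.) -/
def TwoP3Free {V : Type*} (G : SimpleGraph V) : Prop :=
  IsEmpty ((pathGraph 3 ⊕g pathGraph 3) ↪g G)

/-- If `G` is a finite simple `2P₃`-free graph and `M` is an acyclic
matching in `G`, then at most one connected component of the induced subgraph `G(M)`
is not isomorphic to `K₂`. -/
theorem twoP3Free_acyclicMatching_at_most_one_nonK2_component {V : Type*} [Fintype V]
    (G : SimpleGraph V) (hfree : TwoP3Free G) (M : G.Subgraph) (hM : M.IsMatching)
    (hac : (G.induce M.verts).IsAcyclic) :
    ∀ c c' : (G.induce M.verts).ConnectedComponent,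
      ¬ Nonempty (((G.induce M.verts).induce c.supp) ≃g (⊤ : SimpleGraph (Fin 2))) →
      ¬ Nonempty (((G.induce M.verts).induce c'.supp) ≃g (⊤ : SimpleGraph (Fin 2))) →
      c = c' := by
  classical
  intro c c' hc hc'
  by_contra hne
  have key : ∀ d : (G.induce M.verts).ConnectedComponent,
      ¬ Nonempty (((G.induce M.verts).induce d.supp) ≃g (⊤ : SimpleGraph (Fin 2))) →
      ∃ a y b : M.verts, a ∈ d.supp ∧ y ∈ d.supp ∧ b ∈ d.supp ∧
        (G.induce M.verts).Adj y a ∧ (G.induce M.verts).Adj y b ∧ a ≠ b ∧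
        ¬ (G.induce M.verts).Adj a b := by
    intro d hd
    obtain ⟨v, hv⟩ := d.exists_rep
    obtain ⟨w0, hw0, -⟩ := hM v.2
    have hw0m : w0 ∈ M.verts := M.edge_vert (M.adj_symm hw0)
    set w : M.verts := ⟨w0, hw0m⟩ with hwdef
    have hadjvw : (G.induce M.verts).Adj v w := M.adj_sub hw0
    have hvs : v ∈ d.supp := by rw [ConnectedComponent.mem_supp_iff]; exact hv
    have hws : w ∈ d.supp := by
      rw [ConnectedComponent.mem_supp_iff, ← hv]
      exact ConnectedComponent.sound hadjvw.symm.reachable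
    by_cases hu : ∃ u, u ∈ d.supp ∧ u ≠ v ∧ u ≠ w
    · obtain ⟨u, hus, huv, huw⟩ := hu
      have hreach : (G.induce M.verts).Reachable u v := by
        rw [ConnectedComponent.mem_supp_iff] at hus hvs
        exact ConnectedComponent.exact (hus.trans hvs.symm)
      obtain ⟨a, yy, b, hya, hyb, hab, hnab, hry⟩ := aux_center hac huv huw hadjvw hreach
      rw [ConnectedComponent.mem_supp_iff] at hus
      have hys : yy ∈ d.supp := by
        rw [ConnectedComponent.mem_supp_iff, ← hus]
        exact (ConnectedComponent.sound hry.symm)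
      rw [ConnectedComponent.mem_supp_iff] at hys
      have has : a ∈ d.supp := by
        rw [ConnectedComponent.mem_supp_iff, ← hys]
        exact ConnectedComponent.sound hya.symm.reachable
      have hbs : b ∈ d.supp := by
        rw [ConnectedComponent.mem_supp_iff, ← hys]
        exact ConnectedComponent.sound hyb.symm.reachable
      exact ⟨a, yy, b, has, by rwa [ConnectedComponent.mem_supp_iff], hbs, hya, hyb, hab, hnab⟩
    · exfalso
      push_neg at hu
      have hu2 : ∀ x, x ∈ d.supp → x = v ∨ x = w := by
        intro x hx
        by_cases hxv : x = v
        · exact Or.inl hxv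
        · exact Or.inr (hu x hx hxv)
      apply hd
      have hvw : v ≠ w := hadjvw.ne
      refine ⟨⟨fun x => if (x : M.verts) = v then 0 else 1,
        fun i => if i = 0 then ⟨v, hvs⟩ else ⟨w, hws⟩, ?_, ?_⟩, ?_⟩
      · rintro ⟨x, hx⟩
        rcases hu2 x hx with rfl | rfl
        · simp
        · simp [hvw.symm, Subtype.ext_iff]
      · intro i
        fin_cases i <;> simp [hvw.symm]
      · rintro ⟨x, hx⟩ ⟨z, hz⟩
        rcases hu2 x hx with rfl | rfl <;> rcases hu2 z hz with rfl | rfl <;>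
          simp only [top_adj, comap_adj, Function.Embedding.coe_subtype, ne_eq,
            Subtype.mk.injEq, if_pos rfl, hvw, hvw.symm, if_neg]
        · simpa using (G.induce M.verts).irrefl (x := v)
        · simp [hvw.symm]
          exact hadjvw
        · simp [hvw.symm]
          exact hadjvw.symm
        · simpa [hvw.symm] using (G.induce M.verts).irrefl (x := w)
  obtain ⟨a, y, b, has, hys, hbs, hya, hyb, hab, hnab⟩ := key c hc
  obtain ⟨a', y', b', has', hys', hbs', hya', hyb', hab', hnab'⟩ := key c' hc'
  have hcross : ∀ x x', x ∈ ({a, y, b} : Set M.verts) → x' ∈ ({a', y', b'} : Set M.verts) →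
      x ≠ x' ∧ ¬ (G.induce M.verts).Adj x x' := by
    intro x x' hx hx'
    have hxs : x ∈ c.supp := by
      rcases hx with rfl | rfl | rfl <;> assumption
    have hxs' : x' ∈ c'.supp := by
      rcases hx' with rfl | rfl | rfl <;> assumption
    rw [ConnectedComponent.mem_supp_iff] at hxs hxs'
    constructor
    · rintro rfl
      exact hne (hxs.symm.trans hxs')
    · intro hadj
      exact hne ((hxs.symm.trans (ConnectedComponent.sound hadj.reachable)).trans hxs')
  have f := path3Emb hya hyb hab hnab
  have g := path3Emb hya' hyb' hab' hnab'
  have hmemf : ∀ i : Fin 3, (path3Emb hya hyb hab hnab) i ∈ ({a, y, b} : Set M.verts) := by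
    intro i; fin_cases i <;> simp
  have hmemg : ∀ i : Fin 3,
      (path3Emb hya' hyb' hab' hnab') i ∈ ({a', y', b'} : Set M.verts) := by
    intro i; fin_cases i <;> simp
  have emb : (pathGraph 3 ⊕g pathGraph 3) ↪g (G.induce M.verts) :=
    sumEmb (path3Emb hya hyb hab hnab) (path3Emb hya' hyb' hab' hnab')
      (fun u v => (hcross _ _ (hmemf u) (hmemg v)).1)
      (fun u v => (hcross _ _ (hmemf u) (hmemg v)).2)
  exact hfree.false ((Embedding.induce M.verts).comp emb)
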